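/- Let I be a squarefree monomial ideal in S = K[x₁,…,xₙ] over a field K. If the associated hypergraph H(I) has no special triangle, then I^(2) = I². -/

import Mathlib

open MvPolynomial CategoryTheory

/-- `Δ` is a simplicial complex on the vertex set `V`: it is closed under subsets,
contains the empty face and contains every singleton. -/
def IsSimplicialComplex {V : Type} (Δ : Set (Finset V)) : Prop :=
  (∀ F ∈ Δ, ∀ G, G ⊆ F → G ∈ Δ) ∧ (∅ : Finset V) ∈ Δ ∧ ∀ v : V, ({v} : Finset V) ∈ Δ

/-- The Stanley–Reisner ideal of `Δ`: the ideal generated by the squarefree monomials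
`∏_{i ∈ F} x_i` for the non-faces `F` of `Δ`. -/
noncomputable def SRIdeal (K : Type) [Field K] {V : Type} (Δ : Set (Finset V)) :
    Ideal (MvPolynomial V K) :=
  Ideal.span ((fun F : Finset V => ∏ i ∈ F, X i) '' {F | F ∉ Δ})

/-- The irrelevant maximal ideal `m = (x_v : v ∈ V)` of the polynomial ring. -/
noncomputable def mxIdeal (K : Type) [Field K] (V : Type) : Ideal (MvPolynomial V K) :=
  Ideal.span (Set.range (X : V → MvPolynomial V K))

/-- The depth of the ideal `m` on the ring `A`: the supremum of the lengths of
regular sequences on `A` contained in `m`. -/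
noncomputable def ringDepth (A : Type) [CommRing A] (m : Ideal A) : ℕ∞ :=
  sSup {d : ℕ∞ | ∃ rs : List A, (rs.length : ℕ∞) = d ∧ (∀ r ∈ rs, r ∈ m) ∧
    RingTheory.Sequence.IsRegular A rs}

/-- `S ⧸ J` is Cohen–Macaulay: its depth (with respect to the image of the maximal
ideal `m`) equals its Krull dimension. -/
def IsCMQuot (S : Type) [CommRing S] (m J : Ideal S) : Prop :=
  ((ringDepth (S ⧸ J) (m.map (Ideal.Quotient.mk J)) : ℕ∞) : WithBot ℕ∞) = ringKrullDim (S ⧸ J)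

/-- The second symbolic power of an ideal `I`: the intersection of `P ^ 2` over the
minimal primes `P` of `I`. -/
noncomputable def symb2 {S : Type} [CommRing S] (I : Ideal S) : Ideal S :=
  ⨅ P ∈ I.minimalPrimes, P ^ 2

/-- `Ext_A^i(A/m, A)`. -/
noncomputable def extPow (A : Type) [CommRing A] (m : Ideal A) (i : ℕ) : ModuleCat A :=
  ((Ext A (ModuleCat A) i).obj (Opposite.op (ModuleCat.of A (A ⧸ m)))).obj (ModuleCat.of A A)

/-- `S ⧸ J` (with maximal ideal the image of `m`) is Gorenstein: it is Cohen–Macaulay and,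
with `d = dim S/J` and `k = (S/J)/m` the residue field, the Bass numbers are those of a
Gorenstein ring: `Ext^i(k, S/J) = 0` for `i ≠ d` and `Ext^d(k, S/J) ≅ k`. -/
def IsGorQuot (S : Type) [CommRing S] (m J : Ideal S) : Prop :=
  IsCMQuot S m J ∧ ∃ d : ℕ, ((d : ℕ∞) : WithBot ℕ∞) = ringKrullDim (S ⧸ J) ∧
    (∀ i : ℕ, i ≠ d → Subsingleton (extPow (S ⧸ J) (m.map (Ideal.Quotient.mk J)) i)) ∧
    Nonempty ((extPow (S ⧸ J) (m.map (Ideal.Quotient.mk J)) d) ≃ₗ[S ⧸ J]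
      ((S ⧸ J) ⧸ (m.map (Ideal.Quotient.mk J))))

/-- `S ⧸ J` is quasi-Buchsbaum: `m` annihilates the local cohomology module
`H_m^i(S/J)` for all `i < dim S/J`. -/
def IsQuasiBuchsbaum (S : Type) [CommRing S] (m J : Ideal S) : Prop :=
  ∀ i : ℕ, ((i : ℕ∞) : WithBot ℕ∞) < ringKrullDim (S ⧸ J) →
    ∀ r ∈ m, ∀ x : (localCohomology m i).obj (ModuleCat.of S (S ⧸ J)), r • x = 0

/-- `S ⧸ J` has finite local cohomology (FLC): the local cohomology module `H_m^i(S/J)`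
has finite length (equivalently, is both Noetherian and Artinian) for all `i < dim S/J`. -/
def HasFLC (S : Type) [CommRing S] (m J : Ideal S) : Prop :=
  ∀ i : ℕ, ((i : ℕ∞) : WithBot ℕ∞) < ringKrullDim (S ⧸ J) →
    IsNoetherian S ((localCohomology m i).obj (ModuleCat.of S (S ⧸ J))) ∧
    IsArtinian S ((localCohomology m i).obj (ModuleCat.of S (S ⧸ J)))

/-- Serre's condition `(S₂)`: for every prime `P` of `A`,
`depth A_P ≥ min (dim A_P) 2`. -/
def SerreS2 (A : Type) [CommRing A] : Prop :=
  ∀ (P : Ideal A) (hP : P.IsPrime),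
    haveI := hP
    min (ringKrullDim (Localization.AtPrime P)) 2 ≤
      ((ringDepth (Localization.AtPrime P)
        (IsLocalRing.maximalIdeal (Localization.AtPrime P)) : ℕ∞) : WithBot ℕ∞)

/-- The link of a face `F` in `Δ`. -/
def linkOf {V : Type} [DecidableEq V] (Δ : Set (Finset V)) (F : Finset V) : Set (Finset V) :=
  {H | H ∈ Δ ∧ H ∩ F = ∅ ∧ H ∪ F ∈ Δ}

/-- The 1-skeleton of the complex `Γ` (the graph on the vertices of `Γ` whose edges are the
1-dimensional faces of `Γ`) is connected of diameter at most 2: any two distinct vertices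
are joined by a path of length at most 2. -/
def skeletonDiamLE2 {V : Type} [DecidableEq V] (Γ : Set (Finset V)) : Prop :=
  ∀ u v : V, ({u} : Finset V) ∈ Γ → ({v} : Finset V) ∈ Γ → u ≠ v →
    (({u, v} : Finset V) ∈ Γ ∨ ∃ w : V, ({u, w} : Finset V) ∈ Γ ∧ ({w, v} : Finset V) ∈ Γ)

/-- `linkOf Δ F` has dimension at least 1, i.e. it has a face with at least 2 vertices. -/
def linkDimGE1 {V : Type} [DecidableEq V] (Δ : Set (Finset V)) (F : Finset V) : Prop :=
  ∃ H ∈ linkOf Δ F, 2 ≤ H.card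

/-- The squarefree monomial ideal generated by the monomials `x^H = ∏_{a ∈ H} x_a`, `H ∈ E`. -/
noncomputable def sqfIdeal (K : Type) [Field K] {V : Type} (E : Set (Finset V)) :
    Ideal (MvPolynomial V K) :=
  Ideal.span ((fun H : Finset V => ∏ a ∈ H, X a) '' E)

/-- The edges `H₁, H₂, H₃` make the special triangle `{i, j, k}`. -/
def MakeSpecialTriangle {V : Type} [DecidableEq V] (H₁ H₂ H₃ : Finset V) (i j k : V) : Prop :=
  i ≠ j ∧ j ≠ k ∧ i ≠ k ∧
  H₁ ∩ ({i, j, k} : Finset V) = {j, k} ∧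
  H₂ ∩ ({i, j, k} : Finset V) = {i, k} ∧
  H₃ ∩ ({i, j, k} : Finset V) = {i, j}

namespace Stmt10Aux

/-- Build a special triangle from membership data. -/
lemma mst_of_mem {V : Type} [DecidableEq V] {H₁ H₂ H₃ : Finset V} {i j k : V}
    (hi2 : i ∈ H₂) (hi3 : i ∈ H₃) (hi1 : i ∉ H₁)
    (hj1 : j ∈ H₁) (hj3 : j ∈ H₃) (hj2 : j ∉ H₂)
    (hk1 : k ∈ H₁) (hk2 : k ∈ H₂) (hk3 : k ∉ H₃) :
    MakeSpecialTriangle H₁ H₂ H₃ i j k := by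
  have hij : i ≠ j := fun h => hi1 (h ▸ hj1)
  have hjk : j ≠ k := fun h => hj2 (h ▸ hk2)
  have hik : i ≠ k := fun h => hi1 (h ▸ hk1)
  refine ⟨hij, hjk, hik, ?_, ?_, ?_⟩ <;>
  · ext v
    simp only [Finset.mem_inter, Finset.mem_insert, Finset.mem_singleton]
    constructor
    · rintro ⟨hv, rfl | rfl | rfl⟩ <;> tauto
    · rintro (rfl | rfl) <;> tauto

/-- Helly-type: a finite family pairwise intersecting inside `U` with no common
element of `U` contains a special triangle. -/
lemma helly {V : Type} [DecidableEq V] (F : Finset (Finset V)) (U : Finset V)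
    (hne : F.Nonempty)
    (hpair : ∀ H ∈ F, ∀ H' ∈ F, ((H ∩ H') ∩ U).Nonempty)
    (hcommon : ¬ ∃ u ∈ U, ∀ H ∈ F, u ∈ H) :
    ∃ H₁ ∈ F, ∃ H₂ ∈ F, ∃ H₃ ∈ F, ∃ i j k : V, MakeSpecialTriangle H₁ H₂ H₃ i j k := by
  -- take G ⊆ F minimal with no common element of U
  have hF : F ∈ F.powerset.filter (fun G => ¬ ∃ u ∈ U, ∀ H ∈ G, u ∈ H) := by
    simp only [Finset.mem_filter, Finset.mem_powerset]
    exact ⟨subset_rfl, hcommon⟩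
  obtain ⟨G, hG, hGmin⟩ := Finset.exists_min_image _ Finset.card ⟨F, hF⟩
  simp only [Finset.mem_filter, Finset.mem_powerset] at hG
  obtain ⟨hGF, hGnc⟩ := hG
  -- G has at least 3 elements
  have hcard : 2 < G.card := by
    by_contra h
    push_neg at h
    interval_cases hc : G.card
    · obtain rfl := Finset.card_eq_zero.mp hc
      obtain ⟨H, hH⟩ := hne
      obtain ⟨u, hu⟩ := hpair H hH H hH
      simp only [Finset.mem_inter] at hu
      exact hGnc ⟨u, hu.2, by simp⟩
    · obtain ⟨H, rfl⟩ := Finset.card_eq_one.mp hc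
      obtain ⟨u, hu⟩ := hpair H (hGF (by simp)) H (hGF (by simp))
      simp only [Finset.mem_inter] at hu
      exact hGnc ⟨u, hu.2, by simp [hu.1.1]⟩
    · obtain ⟨H, H', hne', rfl⟩ := Finset.card_eq_two.mp hc
      obtain ⟨u, hu⟩ := hpair H (hGF (by simp)) H' (hGF (by simp))
      simp only [Finset.mem_inter] at hu
      refine hGnc ⟨u, hu.2, ?_⟩
      intro H'' hH''
      rcases Finset.mem_insert.mp hH'' with rfl | h
      · exact hu.1.1
      · rw [Finset.mem_singleton] at h; exact h ▸ hu.1.2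
  obtain ⟨H₁, hH₁, H₂, hH₂, H₃, hH₃, h12, h13, h23⟩ := Finset.two_lt_card.mp hcard
  -- for each Hₐ, the family G.erase Hₐ has a common element
  have key : ∀ H ∈ G, ∃ u ∈ U, (∀ H' ∈ G.erase H, u ∈ H') ∧ u ∉ H := by
    intro H hH
    have hcard' : (G.erase H).card < G.card := Finset.card_erase_lt_of_mem hH
    have : ¬ (G.erase H ∈ F.powerset.filter (fun G => ¬ ∃ u ∈ U, ∀ H ∈ G, u ∈ H)) := by
      intro hmem
      exact absurd (hGmin _ hmem) (by omega)
    simp only [Finset.mem_filter, Finset.mem_powerset, not_and, not_not] at this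
    obtain ⟨u, huU, hu⟩ := this ((Finset.erase_subset _ _).trans hGF)
    refine ⟨u, huU, hu, fun huH => ?_⟩
    refine hGnc ⟨u, huU, fun H' hH' => ?_⟩
    by_cases h : H' = H
    · exact h ▸ huH
    · exact hu H' (Finset.mem_erase.mpr ⟨h, hH'⟩)
  obtain ⟨i, _, hi, hi1⟩ := key H₁ hH₁
  obtain ⟨j, _, hj, hj2⟩ := key H₂ hH₂
  obtain ⟨k, _, hk, hk3⟩ := key H₃ hH₃
  refine ⟨H₁, hGF hH₁, H₂, hGF hH₂, H₃, hGF hH₃, i, j, k, ?_⟩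
  exact mst_of_mem (hi _ (Finset.mem_erase.mpr ⟨(Ne.symm h12), hH₂⟩))
    (hi _ (Finset.mem_erase.mpr ⟨(Ne.symm h13), hH₃⟩)) hi1
    (hj _ (Finset.mem_erase.mpr ⟨h12, hH₁⟩))
    (hj _ (Finset.mem_erase.mpr ⟨(Ne.symm h23), hH₃⟩)) hj2
    (hk _ (Finset.mem_erase.mpr ⟨h13, hH₁⟩))
    (hk _ (Finset.mem_erase.mpr ⟨h23, hH₂⟩)) hk3

variable {n : ℕ} {K : Type} [Field K]

/-- exponent vector of a squarefree monomial -/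
noncomputable def eH (H : Finset (Fin n)) : (Fin n) →₀ ℕ := ∑ a ∈ H, Finsupp.single a 1

lemma eH_apply (H : Finset (Fin n)) (v : Fin n) : eH H v = if v ∈ H then 1 else 0 := by
  classical
  simp only [eH, Finsupp.finset_sum_apply, Finsupp.single_apply]
  rw [Finset.sum_ite_eq' H v (fun _ => 1)]

lemma prod_X_eq (H : Finset (Fin n)) :
    (∏ a ∈ H, X a : MvPolynomial (Fin n) K) = monomial (eH H) 1 := by
  classical
  induction H using Finset.induction with
  | empty => simp [eH, monomial_zero']
  | @insert a s ha ih =>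
    rw [Finset.prod_insert ha, ih,
      show eH (insert a s) = Finsupp.single a 1 + eH s from by rw [eH, eH, Finset.sum_insert ha],
      X, monomial_mul, one_mul]

/-- `C` is a vertex cover of the hypergraph `E`. -/
def Cover (E : Set (Finset (Fin n))) (C : Finset (Fin n)) : Prop := ∀ H ∈ E, ∃ v ∈ H, v ∈ C

def MinCover (E : Set (Finset (Fin n))) (C : Finset (Fin n)) : Prop :=
  Cover E C ∧ ∀ D ⊆ C, Cover E D → D = C

lemma exists_minCover {E : Set (Finset (Fin n))} {C : Finset (Fin n)} (h : Cover E C) :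
    ∃ D ⊆ C, MinCover E D := by
  classical
  have hC : C ∈ C.powerset.filter (fun D => Cover E D) := by
    simp only [Finset.mem_filter, Finset.mem_powerset]
    exact ⟨subset_rfl, h⟩
  obtain ⟨D, hD, hDmin⟩ := Finset.exists_min_image _ Finset.card ⟨C, hC⟩
  simp only [Finset.mem_filter, Finset.mem_powerset] at hD
  refine ⟨D, hD.1, hD.2, fun D' hD' hcov => ?_⟩
  have : D.card ≤ D'.card := hDmin D' (by
    simp only [Finset.mem_filter, Finset.mem_powerset]
    exact ⟨hD'.trans hD.1, hcov⟩)
  exact Finset.eq_of_subset_of_card_le hD' this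

/-- The monomial prime associated to a vertex set `C`. -/
noncomputable def PC (K : Type) [Field K] (C : Finset (Fin n)) : Ideal (MvPolynomial (Fin n) K) :=
  Ideal.span (X '' (↑C : Set (Fin n)))

lemma X_mem_PC {C : Finset (Fin n)} {i : Fin n} : X i ∈ PC K C ↔ i ∈ C := by
  rw [PC, mem_ideal_span_X_image]
  constructor
  · intro h
    obtain ⟨j, hj, hj'⟩ := h (Finsupp.single i 1) (by rw [support_X]; simp)
    simp only [Finsupp.single_apply] at hj'
    split_ifs at hj' with he
    · exact he ▸ (by exact_mod_cast hj)
    · exact absurd rfl hj'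
  · intro hi m hm
    rw [support_X, Finset.mem_singleton] at hm
    subst hm
    exact ⟨i, by exact_mod_cast hi, by simp⟩

lemma PC_isPrime (C : Finset (Fin n)) : (PC K C).IsPrime := by
  classical
  set φ : MvPolynomial (Fin n) K →ₐ[K] MvPolynomial (Fin n) K :=
    aeval (fun i => if i ∈ C then 0 else X i) with hφ
  have hsub : ∀ f : MvPolynomial (Fin n) K, f - φ f ∈ PC K C := by
    intro f
    induction f using MvPolynomial.induction_on with
    | C a => simp [hφ, aeval_C, algebraMap_eq]
    | add p q hp hq =>
      have : p + q - φ (p + q) = (p - φ p) + (q - φ q) := by rw [map_add]; ring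
      rw [this]; exact Ideal.add_mem _ hp hq
    | mul_X p i hp =>
      have : p * X i - φ (p * X i) = (p - φ p) * X i + φ p * (X i - φ (X i)) := by
        rw [map_mul]; ring
      rw [this]
      refine Ideal.add_mem _ (Ideal.mul_mem_right _ _ hp) ?_
      have : X i - φ (X i) = if i ∈ C then X i else 0 := by
        rw [hφ, aeval_X]; split_ifs <;> simp
      rw [this]
      split_ifs with hi
      · exact Ideal.mul_mem_left _ _ (X_mem_PC.mpr hi)
      · simp
  have hker : PC K C = RingHom.ker (φ : MvPolynomial (Fin n) K →+* MvPolynomial (Fin n) K) := by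
    apply le_antisymm
    · rw [PC, Ideal.span_le]
      rintro - ⟨i, hi, rfl⟩
      simp only [SetLike.mem_coe, RingHom.mem_ker]
      show φ (X i) = 0
      rw [hφ, aeval_X, if_pos (by exact_mod_cast hi)]
    · intro f hf
      have : φ f = 0 := hf
      have := hsub f
      rwa [‹φ f = 0›, sub_zero] at this
  rw [hker]
  exact RingHom.ker_isPrime _

lemma sqfIdeal_le_PC {E : Set (Finset (Fin n))} {C : Finset (Fin n)} (h : Cover E C) :
    sqfIdeal K E ≤ PC K C := by
  rw [sqfIdeal, Ideal.span_le]
  rintro - ⟨H, hH, rfl⟩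
  obtain ⟨v, hvH, hvC⟩ := h H hH
  simp only [SetLike.mem_coe]
  rw [← Finset.mul_prod_erase H _ hvH]
  exact Ideal.mul_mem_right _ _ (X_mem_PC.mpr hvC)

lemma PC_mem_minimalPrimes {E : Set (Finset (Fin n))} {C : Finset (Fin n)}
    (h : MinCover E C) : PC K C ∈ (sqfIdeal K E).minimalPrimes := by
  classical
  refine ⟨⟨PC_isPrime C, sqfIdeal_le_PC h.1⟩, ?_⟩
  rintro Q ⟨hQ, hIQ⟩ hQP
  set D : Finset (Fin n) := C.filter (fun i => X i ∈ Q) with hD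
  have hDcov : Cover E D := by
    intro H hH
    have hprod : (∏ a ∈ H, X a : MvPolynomial (Fin n) K) ∈ Q :=
      hIQ (Ideal.subset_span ⟨H, hH, rfl⟩)
    haveI := hQ
    obtain ⟨v, hvH, hvQ⟩ := (Ideal.IsPrime.prod_mem_iff).mp hprod
    refine ⟨v, hvH, Finset.mem_filter.mpr ⟨?_, hvQ⟩⟩
    exact X_mem_PC.mp (hQP hvQ)
  have : D = C := h.2 D (Finset.filter_subset _ _) hDcov
  intro f hf
  have hPQ : PC K C ≤ Q := by
    rw [PC, Ideal.span_le]
    rintro - ⟨i, hi, rfl⟩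
    have : (i : Fin n) ∈ D := this ▸ (by exact_mod_cast hi)
    exact (Finset.mem_filter.mp this).2
  exact hPQ hf

lemma sqfIdeal_eq (E : Set (Finset (Fin n))) :
    sqfIdeal K E = Ideal.span ((fun s => monomial s (1 : K)) '' (eH '' E)) := by
  rw [sqfIdeal, Set.image_image]
  exact congrArg Ideal.span (Set.image_congr fun H _ => prod_X_eq H)

lemma span_monomial_mul (S T : Set (Fin n →₀ ℕ)) :
    Ideal.span ((fun s => monomial s (1 : K)) '' S) *
      Ideal.span ((fun s => monomial s (1 : K)) '' T) =
    Ideal.span ((fun s => monomial s (1 : K)) '' (Set.image2 (· + ·) S T)) := by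
  rw [Ideal.span_mul_span']
  congr 1
  ext z
  rw [Set.mem_mul]
  constructor
  · rintro ⟨x, hx, y, hy, rfl⟩
    obtain ⟨s, hs, rfl⟩ := hx
    obtain ⟨t, ht, rfl⟩ := hy
    exact ⟨s + t, Set.mem_image2_of_mem hs ht, by rw [monomial_mul, one_mul]⟩
  · rintro ⟨u, hu, rfl⟩
    obtain ⟨s, hs, t, ht, rfl⟩ := hu
    exact ⟨monomial s 1, ⟨s, hs, rfl⟩, monomial t 1, ⟨t, ht, rfl⟩,
      by rw [monomial_mul, one_mul]⟩

lemma mem_sqfIdeal_sq {E : Set (Finset (Fin n))} {f : MvPolynomial (Fin n) K} :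
    f ∈ (sqfIdeal K E) ^ 2 ↔ ∀ m ∈ f.support, ∃ H ∈ E, ∃ H' ∈ E, eH H + eH H' ≤ m := by
  rw [pow_two, sqfIdeal_eq, span_monomial_mul, mem_ideal_span_monomial_image]
  constructor
  · intro h m hm
    obtain ⟨si, hsi, hle⟩ := h m hm
    obtain ⟨s, ⟨H, hH, rfl⟩, t, ⟨H', hH', rfl⟩, rfl⟩ := hsi
    exact ⟨H, hH, H', hH', hle⟩
  · intro h m hm
    obtain ⟨H, hH, H', hH', hle⟩ := h m hm
    exact ⟨eH H + eH H', Set.mem_image2_of_mem ⟨H, hH, rfl⟩ ⟨H', hH', rfl⟩, hle⟩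

lemma mem_PC_sq {C : Finset (Fin n)} {f : MvPolynomial (Fin n) K} (hf : f ∈ (PC K C) ^ 2) :
    ∀ m ∈ f.support, ∃ i ∈ C, ∃ j ∈ C, Finsupp.single i 1 + Finsupp.single j 1 ≤ m := by
  have hPC : PC K C =
      Ideal.span ((fun s => monomial s (1 : K)) '' ((fun i => Finsupp.single i 1) '' ↑C)) := by
    rw [PC, Set.image_image]
    rfl
  rw [pow_two, hPC, span_monomial_mul, mem_ideal_span_monomial_image] at hf
  intro m hm
  obtain ⟨si, hsi, hle⟩ := hf m hm
  obtain ⟨s, ⟨i, hi, rfl⟩, t, ⟨j, hj, rfl⟩, rfl⟩ := hsi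
  exact ⟨i, by exact_mod_cast hi, j, by exact_mod_cast hj, hle⟩

end Stmt10Aux

open Stmt10Aux in
/-- If the hypergraph of minimal generators of a squarefree monomial ideal `I` has no
special triangle, then `I^(2) = I²`. -/
theorem stmt10 (n : ℕ) (K : Type) [Field K] (E : Set (Finset (Fin n)))
    (hmin : ∀ H ∈ E, ∀ H' ∈ E, H ⊆ H' → H = H')
    (hno : ¬ ∃ H₁ ∈ E, ∃ H₂ ∈ E, ∃ H₃ ∈ E, ∃ i j k : Fin n,
      MakeSpecialTriangle H₁ H₂ H₃ i j k) :
    symb2 (sqfIdeal K E) = (sqfIdeal K E) ^ 2 := by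
  classical
  by_cases hempty : (∅ : Finset (Fin n)) ∈ E
  · -- the ideal is the whole ring
    have hI : sqfIdeal K E = ⊤ := by
      rw [Ideal.eq_top_iff_one]
      exact Ideal.subset_span ⟨∅, hempty, by simp⟩
    have hmp : (⊤ : Ideal (MvPolynomial (Fin n) K)).minimalPrimes = ∅ := by
      ext P
      simp only [Set.mem_empty_iff_false, iff_false]
      rintro ⟨⟨hP, hle⟩, -⟩
      exact hP.ne_top (top_le_iff.mp hle)
    rw [hI, symb2, hmp]
    simp [Ideal.top_pow]
  by_cases hE : E = ∅
  · -- the ideal is zero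
    subst hE
    have hI : sqfIdeal K (∅ : Set (Finset (Fin n))) = ⊥ := by
      rw [sqfIdeal]; simp
    have hmp : (⊥ : Ideal (MvPolynomial (Fin n) K)).minimalPrimes = {⊥} := by
      ext P
      simp only [Set.mem_singleton_iff]
      constructor
      · rintro ⟨⟨hP, -⟩, hmin'⟩
        exact le_antisymm (hmin' ⟨Ideal.bot_prime, le_rfl⟩ bot_le) bot_le
      · rintro rfl
        exact ⟨⟨Ideal.bot_prime, le_rfl⟩, fun y _ _ => bot_le⟩
    rw [hI, symb2, hmp]
    simp [pow_two, Ideal.mul_bot]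
  -- main case : every edge is nonempty and E is nonempty
  apply le_antisymm
  · -- hard inclusion : symbolic square ≤ square
    intro f hf
    rw [mem_sqfIdeal_sq]
    intro m hm
    -- the cover condition satisfied by the exponent m
    have hcov : ∀ C : Finset (Fin n), Cover E C →
        ∃ i ∈ C, ∃ j ∈ C, Finsupp.single i 1 + Finsupp.single j 1 ≤ m := by
      intro C hC
      obtain ⟨D, hDC, hD⟩ := exists_minCover hC
      have hP : PC K D ∈ (sqfIdeal K E).minimalPrimes := PC_mem_minimalPrimes hD
      have hfD : f ∈ (PC K D) ^ 2 := by
        rw [symb2] at hf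
        simp only [Ideal.mem_iInf] at hf
        exact hf _ hP
      obtain ⟨i, hi, j, hj, hij⟩ := mem_PC_sq hfD m hm
      exact ⟨i, hDC hi, j, hDC hj, hij⟩
    set W : Finset (Fin n) := Finset.univ.filter (fun v => 1 ≤ m v) with hW
    set U : Finset (Fin n) := Finset.univ.filter (fun v => m v = 1) with hU
    set Fm : Finset (Finset (Fin n)) := Finset.univ.filter (fun H => H ∈ E ∧ H ⊆ W) with hFm
    have hFm_mem : ∀ H : Finset (Fin n), H ∈ Fm ↔ H ∈ E ∧ H ⊆ W := by
      intro H; simp [hFm]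
    have hmemW : ∀ v : Fin n, v ∈ W ↔ 1 ≤ m v := by intro v; simp [hW]
    have hmemU : ∀ v : Fin n, v ∈ U ↔ m v = 1 := by intro v; simp [hU]
    -- Fm is nonempty
    have hFne : Fm.Nonempty := by
      by_contra h
      rw [Finset.not_nonempty_iff_eq_empty] at h
      have hcovW : Cover E Wᶜ := by
        intro H hH
        by_contra hc
        push_neg at hc
        have hHW : H ⊆ W := by
          intro v hv
          have := hc v hv
          rwa [Finset.mem_compl, not_not] at this
        have : H ∈ Fm := (hFm_mem H).mpr ⟨hH, hHW⟩
        rw [h] at this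
        exact absurd this (Finset.notMem_empty H)
      obtain ⟨i, hiC, j, hjC, hij⟩ := hcov _ hcovW
      have h1 : 1 ≤ m i := by
        have := hij i
        simp only [Finsupp.add_apply, Finsupp.single_eq_same] at this
        omega
      rw [Finset.mem_compl, hmemW] at hiC
      exact hiC h1
    by_cases hpair : ∃ H ∈ Fm, ∃ H' ∈ Fm, H ∩ H' ∩ U = ∅
    · -- finished : these two edges give an element of I² dividing m
      obtain ⟨H, hH, H', hH', hHH'⟩ := hpair
      obtain ⟨hHE, hHW⟩ := (hFm_mem H).mp hH
      obtain ⟨hH'E, hH'W⟩ := (hFm_mem H').mp hH'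
      refine ⟨H, hHE, H', hH'E, ?_⟩
      intro v
      simp only [Finsupp.add_apply]
      rw [eH_apply, eH_apply]
      by_cases hv : v ∈ H
      · by_cases hv' : v ∈ H'
        · -- v is in both, so m v ≥ 2
          have hvU : v ∉ U := by
            intro hvU
            have : v ∈ H ∩ H' ∩ U := by
              simp only [Finset.mem_inter]; exact ⟨⟨hv, hv'⟩, hvU⟩
            rw [hHH'] at this
            exact absurd this (Finset.notMem_empty v)
          have h1 : 1 ≤ m v := (hmemW v).mp (hHW hv)
          have h2 : m v ≠ 1 := fun hc => hvU ((hmemU v).mpr hc)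
          rw [if_pos hv, if_pos hv']
          omega
        · have h1 : 1 ≤ m v := (hmemW v).mp (hHW hv)
          rw [if_pos hv, if_neg hv']
          omega
      · by_cases hv' : v ∈ H'
        · have h1 : 1 ≤ m v := (hmemW v).mp (hH'W hv')
          rw [if_neg hv, if_pos hv']
          omega
        · rw [if_neg hv, if_neg hv']
          omega
    · push_neg at hpair
      have hpair' : ∀ H ∈ Fm, ∀ H' ∈ Fm, (H ∩ H' ∩ U).Nonempty := by
        intro H hH H' hH'
        exact hpair H hH H' hH'
      by_cases hu : ∃ u ∈ U, ∀ H ∈ Fm, u ∈ H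
      · -- contradiction with the cover Wᶜ ∪ {u}
        exfalso
        obtain ⟨u, huU, hucov⟩ := hu
        have hcovu : Cover E (Wᶜ ∪ {u}) := by
          intro H hH
          by_cases hHW : H ⊆ W
          · exact ⟨u, hucov H ((hFm_mem H).mpr ⟨hH, hHW⟩),
              Finset.mem_union_right _ (Finset.mem_singleton_self u)⟩
          · obtain ⟨v, hv, hvW⟩ := Finset.not_subset.mp hHW
            exact ⟨v, hv, Finset.mem_union_left _ (Finset.mem_compl.mpr hvW)⟩
        obtain ⟨i, hiC, j, hjC, hij⟩ := hcov _ hcovu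
        have hmi : 1 ≤ m i := by
          have := hij i
          simp only [Finsupp.add_apply, Finsupp.single_eq_same] at this
          omega
        have hmj : 1 ≤ m j := by
          have := hij j
          simp only [Finsupp.add_apply, Finsupp.single_eq_same] at this
          omega
        have hiu : i = u := by
          rcases Finset.mem_union.mp hiC with h | h
          · rw [Finset.mem_compl, hmemW] at h; omega
          · exact Finset.mem_singleton.mp h
        have hju : j = u := by
          rcases Finset.mem_union.mp hjC with h | h
          · rw [Finset.mem_compl, hmemW] at h; omega
          · exact Finset.mem_singleton.mp h
        rw [hiu, hju] at hij
        have := hij u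
        simp only [Finsupp.add_apply, Finsupp.single_eq_same] at this
        have := (hmemU u).mp huU
        omega
      · -- a special triangle exists : contradiction
        exfalso
        obtain ⟨H₁, hH₁, H₂, hH₂, H₃, hH₃, i, j, k, hmst⟩ := helly Fm U hFne hpair' hu
        exact hno ⟨H₁, ((hFm_mem H₁).mp hH₁).1, H₂, ((hFm_mem H₂).mp hH₂).1,
          H₃, ((hFm_mem H₃).mp hH₃).1, i, j, k, hmst⟩
  · -- easy inclusion : square ≤ symbolic square
    rw [symb2]
    refine le_iInf fun P => le_iInf fun hP => ?_
    exact Ideal.pow_right_mono hP.1.2 2
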